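/- Let (X, μ) be a measurable space with a probability measure, let c_1, …, c_T be a simplex coding in ℝ^{T−1}, T ≥ 2, and let ρ_1, …, ρ_T : X → [0,1] be measurable with ∑_{y=1}^T ρ_y(x) = 1 for all x. Let D : ℝ^{T−1} → {1, …, T} be a measurable decoding map, i.e., ⟨c_{D(α)}, α⟩ = max_y ⟨c_y, α⟩ for all α. Define f_ρ(x) = ∑_{y=1}^T ρ_y(x) c_y, the misclassification risk R(g) = ∫_X (1 − ρ_{g(x)}(x)) dμ(x) for measurable g : X → {1, …, T}, and the expected S-LS risk E(f) = ∫_X ∑_{y=1}^T ρ_y(x) ‖c_y − f(x)‖² dμ(x). Then for every measurable f : X → ℝ^{T−1} with ∫ ‖f‖² dμ < ∞: R(D∘f) − R(D∘f_ρ) ≤ √(2(T−1)/T) · (E(f) − E(f_ρ))^{1/2}, and f_ρ minimizes E over all such square-integrable f. -/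

import Mathlib

open scoped RealInnerProductSpace
open MeasureTheory

/-- comparison inequality for the simplex least squares loss.  With a
probability measure `μ`, conditional probabilities `ρ`, simplex coding `c`, measurable
decoding `D`, target `f_ρ(x) = ∑ y, ρ y x • c y`, misclassification risk
`R g = ∫ (1 - ρ (g x) x) dμ` and expected S-LS risk
`E f = ∫ ∑ y, ρ y x ‖c y - f x‖² dμ`, every measurable square-integrable
`f : X → ℝ^{T-1}` satisfies
`R (D ∘ f) - R (D ∘ f_ρ) ≤ √(2(T-1)/T) (E f - E f_ρ)^{1/2}`, and `f_ρ` minimizes `E`. -/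
theorem simplex_ls_comparison_inequality
    {X : Type*} [MeasurableSpace X] (μ : Measure X) [IsProbabilityMeasure μ]
    (T : ℕ) (hT : 2 ≤ T)
    (c : Fin T → EuclideanSpace ℝ (Fin (T - 1)))
    (hnorm : ∀ y, ‖c y‖ = 1)
    (hinner : ∀ y y', y ≠ y' → ⟪c y, c y'⟫ = -(1 / ((T : ℝ) - 1)))
    (hsum : ∑ y, c y = 0)
    (ρ : Fin T → X → ℝ) (hρmeas : ∀ y, Measurable (ρ y))
    (hρ0 : ∀ y x, 0 ≤ ρ y x) (hρ1 : ∀ y x, ρ y x ≤ 1)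
    (hρsum : ∀ x, ∑ y, ρ y x = 1)
    (D : EuclideanSpace ℝ (Fin (T - 1)) → Fin T) (hDmeas : Measurable D)
    (hD : ∀ α y, ⟪c y, α⟫ ≤ ⟪c (D α), α⟫)
    (fρ : X → EuclideanSpace ℝ (Fin (T - 1))) (hfρ : ∀ x, fρ x = ∑ y, ρ y x • c y)
    (R : (X → Fin T) → ℝ) (hR : ∀ g : X → Fin T, R g = ∫ x, (1 - ρ (g x) x) ∂μ)
    (E : (X → EuclideanSpace ℝ (Fin (T - 1))) → ℝ)
    (hE : ∀ f : X → EuclideanSpace ℝ (Fin (T - 1)),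
      E f = ∫ x, ∑ y, ρ y x * ‖c y - f x‖ ^ 2 ∂μ)
    (f : X → EuclideanSpace ℝ (Fin (T - 1))) (hfmeas : Measurable f)
    (hfint : Integrable (fun x => ‖f x‖ ^ 2) μ) :
    R (D ∘ f) - R (D ∘ fρ) ≤
      Real.sqrt (2 * ((T : ℝ) - 1) / T) * Real.sqrt (E f - E fρ) ∧
    E fρ ≤ E f := by
  have hT2 : (2:ℝ) ≤ (T:ℝ) := by exact_mod_cast hT
  have hT1 : (0:ℝ) < (T:ℝ) - 1 := by linarith
  have hT0 : (0:ℝ) < (T:ℝ) := by linarith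
  set C : ℝ := Real.sqrt (2 * ((T : ℝ) - 1) / T) with hCdef
  have hC0 : 0 ≤ C := Real.sqrt_nonneg _
  -- inner products with fρ
  have hcw : ∀ x y, ⟪c y, fρ x⟫ = (ρ y x * T - 1) / ((T:ℝ) - 1) := by
    intro x y
    rw [hfρ]
    rw [inner_sum]
    simp only [real_inner_smul_right]
    rw [← Finset.add_sum_erase _ _ (Finset.mem_univ y)]
    rw [real_inner_self_eq_norm_sq, hnorm, ]
    have h1 : ∑ y' ∈ Finset.univ.erase y, ρ y' x * ⟪c y, c y'⟫
        = (1 - ρ y x) * (-(1 / ((T:ℝ) - 1))) := by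
      rw [Finset.sum_congr rfl (fun y' hy' => by
        rw [hinner y y' (Ne.symm (Finset.ne_of_mem_erase hy'))])]
      rw [← Finset.sum_mul]
      congr 1
      have := Finset.add_sum_erase Finset.univ (fun y' => ρ y' x) (Finset.mem_univ y)
      rw [hρsum] at this
      linarith
    rw [h1]
    field_simp
    ring
  -- norm bound for fρ
  have hfρbd : ∀ x, ‖fρ x‖ ≤ 1 := by
    intro x
    rw [hfρ]
    calc ‖∑ y, ρ y x • c y‖ ≤ ∑ y, ‖ρ y x • c y‖ := norm_sum_le _ _
      _ = ∑ y, ρ y x := by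
          refine Finset.sum_congr rfl fun y _ => ?_
          rw [norm_smul, hnorm, Real.norm_eq_abs, abs_of_nonneg (hρ0 y x), mul_one]
      _ = 1 := hρsum x
  have hfρmeas : Measurable fρ := by
    have : fρ = fun x => ∑ y, ρ y x • c y := funext hfρ
    rw [this]
    exact Finset.measurable_sum _ fun y _ => (hρmeas y).smul_const (c y)
  -- pointwise comparison bound
  have key : ∀ x, ρ (D (fρ x)) x - ρ (D (f x)) x ≤ C * ‖f x - fρ x‖ := by
    intro x
    by_cases hab : D (fρ x) = D (f x)
    · rw [hab]
      simp only [sub_self]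
      positivity
    · set a := D (f x); set b := D (fρ x)
      have hgap : ρ b x - ρ a x = (((T:ℝ)-1)/T) * (⟪c b, fρ x⟫ - ⟪c a, fρ x⟫) := by
        rw [hcw, hcw]
        field_simp
        ring
      have hfle : ⟪c b - c a, f x⟫ ≤ 0 := by
        rw [inner_sub_left]
        have := hD (f x) b
        linarith
      have hCS : ⟪c b - c a, fρ x - f x⟫ ≤ ‖c b - c a‖ * ‖fρ x - f x‖ :=
        real_inner_le_norm _ _
      have hsplit : ⟪c b, fρ x⟫ - ⟪c a, fρ x⟫
          = ⟪c b - c a, fρ x - f x⟫ + ⟪c b - c a, f x⟫ := by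
        rw [inner_sub_left, inner_sub_left, inner_sub_right, inner_sub_right]
        ring
      have hnab : ‖c b - c a‖ = Real.sqrt (2 * T / ((T:ℝ) - 1)) := by
        rw [← Real.sqrt_sq (norm_nonneg (c b - c a))]
        congr 1
        rw [norm_sub_sq_real, hnorm, hnorm, hinner b a hab]
        field_simp
        ring
      have hconst : (((T:ℝ)-1)/T) * Real.sqrt (2 * T / ((T:ℝ) - 1)) = C := by
        rw [hCdef, ← Real.sqrt_sq (le_of_lt (div_pos hT1 hT0)),
          ← Real.sqrt_mul (sq_nonneg _)]
        congr 1
        field_simp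
      calc ρ b x - ρ a x = (((T:ℝ)-1)/T) * (⟪c b, fρ x⟫ - ⟪c a, fρ x⟫) := hgap
        _ ≤ (((T:ℝ)-1)/T) * (‖c b - c a‖ * ‖fρ x - f x‖) := by
            apply mul_le_mul_of_nonneg_left _ (le_of_lt (div_pos hT1 hT0))
            rw [hsplit]
            linarith
        _ = C * ‖f x - fρ x‖ := by
            rw [hnab, norm_sub_rev, ← mul_assoc, hconst]
  -- sum identity
  have hsumid : ∀ (x : X) (v : EuclideanSpace ℝ (Fin (T-1))),
      ∑ y, ρ y x * ‖c y - v‖^2 = 1 - 2*⟪fρ x, v⟫ + ‖v‖^2 := by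
    intro x v
    have h1 : ⟪fρ x, v⟫ = ∑ y, ρ y x * ⟪c y, v⟫ := by
      rw [hfρ, sum_inner]
      exact Finset.sum_congr rfl fun y _ => real_inner_smul_left _ _ _
    have h2 : ∀ y, ρ y x * ‖c y - v‖^2
        = ρ y x - 2*(ρ y x * ⟪c y, v⟫) + ρ y x * ‖v‖^2 := by
      intro y
      rw [norm_sub_sq_real, hnorm]
      ring
    rw [Finset.sum_congr rfl fun y _ => h2 y]
    rw [Finset.sum_add_distrib, Finset.sum_sub_distrib, ← Finset.mul_sum,
      ← Finset.sum_mul, hρsum, h1]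
    ring
  -- pointwise difference identity
  have hptdiff : ∀ x, (∑ y, ρ y x * ‖c y - f x‖^2) - (∑ y, ρ y x * ‖c y - fρ x‖^2)
      = ‖f x - fρ x‖^2 := by
    intro x
    rw [hsumid x (f x), hsumid x (fρ x), real_inner_self_eq_norm_sq,
      norm_sub_sq_real, real_inner_comm]
    ring
  -- integrability
  have hinnermeas : Measurable fun x => ⟪fρ x, f x⟫ := hfρmeas.inner hfmeas
  have hbig : Integrable (fun x => 1 + ‖f x‖^2) μ := (integrable_const 1).add hfint
  have hinnerint : Integrable (fun x => ⟪fρ x, f x⟫) μ := by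
    refine hbig.mono' hinnermeas.aestronglyMeasurable (ae_of_all _ fun x => ?_)
    have h1 : ‖⟪fρ x, f x⟫‖ ≤ ‖fρ x‖ * ‖f x‖ := by
      rw [Real.norm_eq_abs]; exact abs_real_inner_le_norm _ _
    have h2 : ‖fρ x‖ * ‖f x‖ ≤ 1 * ‖f x‖ :=
      mul_le_mul_of_nonneg_right (hfρbd x) (norm_nonneg _)
    nlinarith [norm_nonneg (f x)]
  have hg1eq : (fun x => ∑ y, ρ y x * ‖c y - f x‖^2)
      = fun x => 1 - 2*⟪fρ x, f x⟫ + ‖f x‖^2 := funext fun x => hsumid x (f x)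
  have hg2eq : (fun x => ∑ y, ρ y x * ‖c y - fρ x‖^2)
      = fun x => 1 - ‖fρ x‖^2 := by
    funext x
    rw [hsumid x (fρ x), real_inner_self_eq_norm_sq]
    ring
  have hg1int : Integrable (fun x => ∑ y, ρ y x * ‖c y - f x‖^2) μ := by
    rw [hg1eq]
    exact ((integrable_const 1).sub (hinnerint.const_mul 2)).add hfint
  have hg2int : Integrable (fun x => ∑ y, ρ y x * ‖c y - fρ x‖^2) μ := by
    rw [hg2eq]
    refine (integrable_const 1).mono' ?_ (ae_of_all _ fun x => ?_)
    · exact (measurable_const.sub ((hfρmeas.norm).pow_const 2)).aestronglyMeasurable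
    · have := hfρbd x
      have h0 : (0:ℝ) ≤ ‖fρ x‖ := norm_nonneg _
      rw [Real.norm_eq_abs, abs_le]
      constructor <;> nlinarith
  have hdiff2int : Integrable (fun x => ‖f x - fρ x‖^2) μ := by
    have : (fun x => ‖f x - fρ x‖^2)
        = fun x => (∑ y, ρ y x * ‖c y - f x‖^2) - (∑ y, ρ y x * ‖c y - fρ x‖^2) :=
      funext fun x => (hptdiff x).symm
    rw [this]
    exact hg1int.sub hg2int
  have hdiffmeas : Measurable fun x => ‖f x - fρ x‖ := (hfmeas.sub hfρmeas).norm
  have hbig2 : Integrable (fun x => 1 + ‖f x - fρ x‖^2) μ :=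
    (integrable_const 1).add hdiff2int
  have hdiffint : Integrable (fun x => ‖f x - fρ x‖) μ := by
    refine hbig2.mono' hdiffmeas.aestronglyMeasurable (ae_of_all _ fun x => ?_)
    rw [Real.norm_eq_abs, abs_of_nonneg (norm_nonneg _)]
    nlinarith [norm_nonneg (f x - fρ x)]
  -- E difference
  have hEdiff : E f - E fρ = ∫ x, ‖f x - fρ x‖^2 ∂μ := by
    rw [hE, hE, ← integral_sub hg1int hg2int]
    exact integral_congr_ae (ae_of_all _ fun x => hptdiff x)
  have hEnn : 0 ≤ ∫ x, ‖f x - fρ x‖^2 ∂μ :=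
    integral_nonneg fun x => sq_nonneg _
  refine ⟨?_, by linarith [hEdiff]⟩
  -- R side
  have hmeasD : ∀ (g : X → EuclideanSpace ℝ (Fin (T-1))), Measurable g →
      Measurable fun x => ρ (D (g x)) x := by
    intro g hg
    have heq : (fun x => ρ (D (g x)) x)
        = fun x => ∑ y, if D (g x) = y then ρ y x else 0 := by
      funext x
      rw [Finset.sum_ite_eq]
      simp
    rw [heq]
    refine Finset.measurable_sum _ fun y _ => Measurable.ite ?_ (hρmeas y) measurable_const
    exact (hDmeas.comp hg) (MeasurableSet.singleton y)
  have hint1 : Integrable (fun x => ρ (D (f x)) x) μ := by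
    refine (integrable_const 1).mono' (hmeasD f hfmeas).aestronglyMeasurable
      (ae_of_all _ fun x => ?_)
    rw [Real.norm_eq_abs, abs_of_nonneg (hρ0 _ x)]
    exact hρ1 _ x
  have hint2 : Integrable (fun x => ρ (D (fρ x)) x) μ := by
    refine (integrable_const 1).mono' (hmeasD fρ hfρmeas).aestronglyMeasurable
      (ae_of_all _ fun x => ?_)
    rw [Real.norm_eq_abs, abs_of_nonneg (hρ0 _ x)]
    exact hρ1 _ x
  have hA : Integrable (fun x => 1 - ρ (D (f x)) x) μ := (integrable_const 1).sub hint1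
  have hB : Integrable (fun x => 1 - ρ (D (fρ x)) x) μ := (integrable_const 1).sub hint2
  have hRdiff : R (D ∘ f) - R (D ∘ fρ)
      = ∫ x, (ρ (D (fρ x)) x - ρ (D (f x)) x) ∂μ := by
    rw [hR, hR]
    simp only [Function.comp_apply]
    rw [← integral_sub hA hB]
    refine integral_congr_ae (ae_of_all _ fun x => ?_)
    ring
  rw [hRdiff]
  calc ∫ x, (ρ (D (fρ x)) x - ρ (D (f x)) x) ∂μ
      ≤ ∫ x, C * ‖f x - fρ x‖ ∂μ :=
        integral_mono (hint2.sub hint1) (hdiffint.const_mul C) key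
    _ = C * ∫ x, ‖f x - fρ x‖ ∂μ := integral_const_mul C _
    _ ≤ C * Real.sqrt (∫ x, ‖f x - fρ x‖^2 ∂μ) := by
        refine mul_le_mul_of_nonneg_left ?_ hC0
        have hmem : MemLp (fun x => ‖f x - fρ x‖) 2 μ :=
          (memLp_two_iff_integrable_sq hdiffmeas.aestronglyMeasurable).2 hdiff2int
        have hv := ProbabilityTheory.variance_nonneg (fun x => ‖f x - fρ x‖) μ
        rw [ProbabilityTheory.variance_eq_sub hmem] at hv
        simp only [Pi.pow_apply] at hv
        have h0 : 0 ≤ ∫ x, ‖f x - fρ x‖ ∂μ := integral_nonneg fun x => norm_nonneg _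
        rw [← Real.sqrt_sq h0]
        exact Real.sqrt_le_sqrt (by linarith)
    _ = C * Real.sqrt (E f - E fρ) := by rw [hEdiff]
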